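/- For two m×n matrices over GF(q) at rank distance d, the number of matrices at rank distance t from the first and rank distance d−t from the second equals q^{t(d-t)} · [d choose t]_q, for all 0 ≤ t ≤ d ≤ min{n,m}. -/

import Mathlib

/-- `galpha q m u = ∏_{i=0}^{u-1} (q^m - q^i)`. -/
def galpha (q m u : ℕ) : ℕ := ∏ i ∈ Finset.range u, (q ^ m - q ^ i)

/-- The Gaussian binomial coefficient `[n choose r]_q = α(n,r)/α(r,r)`. -/
def gauss (q n r : ℕ) : ℕ := galpha q n r / galpha q r r

open Module Submodule LinearMap

section Aux

variable {F : Type*} [Field F] [Fintype F]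

local notation "q" => Fintype.card F

lemma galpha_pos {u m : ℕ} (hu : u ≤ m) : 0 < galpha q m u := by
  apply Finset.prod_pos
  intro i hi
  have hi' : i < m := lt_of_lt_of_le (Finset.mem_range.mp hi) hu
  have h1 : (q) ^ i < q ^ m := Nat.pow_lt_pow_right Fintype.one_lt_card hi'
  omega

variable {V : Type*} [AddCommGroup V] [Module F V] [FiniteDimensional F V]

lemma card_linIndep {k : ℕ} (hk : k ≤ finrank F V) :
    Nat.card {s : Fin k → V // LinearIndependent F s} = galpha q (finrank F V) k := by
  have : Finite V := Module.finite_of_finite F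
  rw [card_linearIndependent hk, galpha, ← Fin.prod_univ_eq_prod_range]

/-- helper: fiber the count of `{a // P a ∧ finrank (r a) = t}` over subspaces. -/
lemma card_fiber {α : Type*} [Finite α] (P : α → Prop) (r : α → Submodule F V) (t : ℕ) (c : ℕ)
    (h : ∀ p : Submodule F V, finrank F p = t → Nat.card {a : α // P a ∧ r a = p} = c) :
    Nat.card {a : α // P a ∧ finrank F (r a) = t} =
      Nat.card {p : Submodule F V // finrank F p = t} * c := by
  classical
  have hV : Finite V := Module.finite_of_finite F
  have hsub : Finite (Submodule F V) := Finite.of_injective _ SetLike.coe_injective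
  letI : Fintype α := Fintype.ofFinite α
  letI : Fintype (Submodule F V) := Fintype.ofFinite _
  have e : (Σ p : {p : Submodule F V // finrank F p = t}, {a : α // P a ∧ r a = p.1}) ≃
      {a : α // P a ∧ finrank F (r a) = t} := by
    refine Equiv.ofBijective (fun x => ⟨x.2.1, x.2.2.1, by rw [x.2.2.2]; exact x.1.2⟩) ?_
    constructor
    · rintro ⟨⟨p₁, hp₁⟩, ⟨a₁, hPa₁, hra₁⟩⟩ ⟨⟨p₂, hp₂⟩, ⟨a₂, hPa₂, hra₂⟩⟩ heq
      have ha : a₁ = a₂ := congrArg Subtype.val heq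
      subst ha
      have hp : p₁ = p₂ := hra₁.symm.trans hra₂
      subst hp
      rfl
    · rintro ⟨a, hPa, hfr⟩
      exact ⟨⟨⟨r a, hfr⟩, ⟨a, hPa, rfl⟩⟩, rfl⟩
  rw [← Nat.card_congr e]
  rw [Nat.card_eq_fintype_card, Fintype.card_sigma]
  have : ∀ p : {p : Submodule F V // finrank F p = t},
      Fintype.card {a : α // P a ∧ r a = p.1} = c := by
    intro p
    rw [← Nat.card_eq_fintype_card]
    exact h p.1 p.2
  rw [Finset.sum_congr rfl (fun p _ => this p), Finset.sum_const, Finset.card_univ,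
    Nat.card_eq_fintype_card, smul_eq_mul]

lemma card_subspaces {t : ℕ} (ht : t ≤ finrank F V) :
    Nat.card {p : Submodule F V // finrank F p = t} = gauss q (finrank F V) t := by
  classical
  have hV : Finite V := Module.finite_of_finite F
  -- fiber count
  have hfiber : ∀ p : Submodule F V, finrank F p = t →
      Nat.card {s : Fin t → V // LinearIndependent F s ∧ span F (Set.range s) = p}
        = galpha q t t := by
    intro p hp
    have e : {s : Fin t → ↥p // LinearIndependent F s} ≃
        {s : Fin t → V // LinearIndependent F s ∧ span F (Set.range s) = p} := by
      refine Equiv.ofBijective (fun s => ⟨fun i => (s.1 i : V), ?_, ?_⟩) ⟨?_, ?_⟩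
      · exact s.2.map' p.subtype (ker_subtype p)
      · have hspan : span F (Set.range s.1) = ⊤ :=
          s.2.span_eq_top_of_card_eq_finrank' (by simp [hp])
        have : Set.range (fun i => (s.1 i : V)) = p.subtype '' Set.range s.1 := by
          ext x; simp [Set.range_comp]
        rw [this, Submodule.span_image, hspan, Submodule.map_subtype_top]
      · rintro ⟨s₁, hs₁⟩ ⟨s₂, hs₂⟩ heq
        have := congrArg Subtype.val heq
        refine Subtype.ext (funext fun i => Subtype.ext ?_)
        exact congrFun this i
      · rintro ⟨s, hs, hsp⟩
        refine ⟨⟨fun i => ⟨s i, ?_⟩, ?_⟩, ?_⟩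
        · rw [← hsp]; exact subset_span (Set.mem_range_self i)
        · exact (LinearIndependent.of_comp p.subtype (by exact hs))
        · rfl
    rw [← Nat.card_congr e]
    have : finrank F ↥p = t := hp
    rw [show galpha q t t = galpha q (finrank F ↥p) t by rw [this],
      ← card_linIndep (le_of_eq this.symm)]
  have key := card_fiber (V := V) (α := Fin t → V) (fun s => LinearIndependent F s)
    (fun s => span F (Set.range s)) t (galpha q t t) hfiber
  have e2 : {s : Fin t → V // LinearIndependent F s} ≃
      {s : Fin t → V // LinearIndependent F s ∧ finrank F (span F (Set.range s)) = t} :=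
    Equiv.subtypeEquivRight (fun s => by
      constructor
      · intro hs
        exact ⟨hs, by rw [finrank_span_eq_card hs]; simp⟩
      · exact fun hs => hs.1)
  have htot : Nat.card {s : Fin t → V // LinearIndependent F s} = galpha q (finrank F V) t :=
    card_linIndep ht
  rw [Nat.card_congr e2, key] at htot
  have hpos : 0 < galpha q t t := galpha_pos le_rfl
  rw [gauss, ← htot, Nat.mul_div_cancel _ hpos]

lemma card_hom (M N : Type*) [AddCommGroup M] [Module F M] [FiniteDimensional F M]
    [AddCommGroup N] [Module F N] [FiniteDimensional F N] :
    Nat.card (M →ₗ[F] N) = q ^ (finrank F M * finrank F N) := by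
  classical
  have : Finite N := Module.finite_of_finite F
  letI : Fintype N := Fintype.ofFinite N
  let b := finBasis F M
  rw [← Nat.card_congr (b.constr (S := F) (M' := N)).toEquiv]
  rw [Nat.card_eq_fintype_card, Fintype.card_fun, card_eq_pow_finrank (K := F) (V := N),
    Fintype.card_fin, ← pow_mul, mul_comm (finrank F N)]

lemma card_proj_set (p : Submodule F V) :
    Nat.card {f : V →ₗ[F] p // ∀ x : p, f (x : V) = x} =
      q ^ ((finrank F V - finrank F p) * finrank F p) := by
  obtain ⟨p', hp'⟩ := Submodule.exists_isCompl p
  let f₀ := p.linearProjOfIsCompl p' hp'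
  have e : {f : V →ₗ[F] p // ∀ x : p, f (x : V) = x} ≃ ((V ⧸ p) →ₗ[F] p) := by
    refine ⟨fun f => p.liftQ (f.1 - f₀) ?_, fun g => ⟨f₀ + g.comp p.mkQ, ?_⟩, ?_, ?_⟩
    · intro x hx
      have h1 : f.1 x = ⟨x, hx⟩ := f.2 ⟨x, hx⟩
      have h2 : f₀ x = ⟨x, hx⟩ := p.linearProjOfIsCompl_apply_left hp' ⟨x, hx⟩
      simp [mem_ker, LinearMap.sub_apply, h1, h2]
    · intro x
      have h2 : f₀ (x : V) = x := p.linearProjOfIsCompl_apply_left hp' x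
      have h3 : p.mkQ (x : V) = 0 := by
        rw [mkQ_apply, Submodule.Quotient.mk_eq_zero]; exact x.2
      simp [h2, h3]
    · intro f
      refine Subtype.ext (LinearMap.ext fun x => ?_)
      simp [liftQ_apply, LinearMap.sub_apply]
    · intro g
      refine LinearMap.ext fun y => ?_
      obtain ⟨x, rfl⟩ := p.mkQ_surjective y
      simp [liftQ_apply, LinearMap.sub_apply]
  rw [Nat.card_congr e, card_hom]
  congr 2
  have := p.finrank_quotient_add_finrank
  have hle : finrank F p ≤ finrank F V := p.finrank_le
  omega

/-- Idempotents with range `p` correspond to projections onto `p`. -/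
def idemEquiv (p : Submodule F V) :
    {f : V →ₗ[F] p // ∀ x : p, f (x : V) = x} ≃
      {g : V →ₗ[F] V // IsIdempotentElem g ∧ range g = p} where
  toFun f := ⟨p.subtype ∘ₗ f.1, by
      have : ∀ x, f.1 ((p.subtype ∘ₗ f.1) x) = f.1 x := fun x => f.2 (f.1 x)
      refine LinearMap.ext fun x => ?_
      show (p.subtype ∘ₗ f.1) ((p.subtype ∘ₗ f.1) x) = (p.subtype ∘ₗ f.1) x
      simp only [comp_apply]
      rw [show f.1 ((p.subtype) (f.1 x)) = f.1 x from f.2 (f.1 x)], by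
      rw [range_comp]
      have : range f.1 = ⊤ := range_eq_top.2 fun y => ⟨(y : V), f.2 y⟩
      rw [this, Submodule.map_subtype_top]⟩
  invFun g := ⟨codRestrict p g.1 (fun x => by have h := mem_range_self g.1 x; rwa [g.2.2] at h), by
      intro x
      have hx : (x : V) ∈ range g.1 := g.2.2.symm ▸ x.2
      obtain ⟨y, hy⟩ := hx
      refine Subtype.ext ?_
      show g.1 (x : V) = (x : V)
      rw [← hy, ← Module.End.mul_apply, g.2.1]⟩
  left_inv f := Subtype.ext (LinearMap.ext fun x => Subtype.ext rfl)
  right_inv g := Subtype.ext (LinearMap.ext fun x => rfl)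

lemma card_idem_range (p : Submodule F V) :
    Nat.card {g : V →ₗ[F] V // IsIdempotentElem g ∧ range g = p} =
      q ^ ((finrank F V - finrank F p) * finrank F p) := by
  rw [← Nat.card_congr (idemEquiv p), card_proj_set]

lemma card_idem_rank {t : ℕ} (ht : t ≤ finrank F V) :
    Nat.card {g : V →ₗ[F] V // IsIdempotentElem g ∧ finrank F (range g) = t} =
      gauss q (finrank F V) t * q ^ ((finrank F V - t) * t) := by
  have : Finite V := Module.finite_of_finite F
  have hfin : Finite (V →ₗ[F] V) :=
    Finite.of_injective (fun f => (f : V → V)) DFunLike.coe_injective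
  have h := card_fiber (V := V) (α := V →ₗ[F] V) IsIdempotentElem (fun g => range g) t
    (q ^ ((finrank F V - t) * t)) (fun p hp => by rw [card_idem_range, hp])
  rw [h, card_subspaces ht]

end Aux

section Main

variable {F : Type*} [Field F] [Fintype F]

local notation "q" => Fintype.card F

variable {V : Type*} [AddCommGroup V] [Module F V] [FiniteDimensional F V]

lemma idem_iff_rank {d t : ℕ} (hd : finrank F V = d) (ht : t ≤ d) (Q : V →ₗ[F] V) :
    (finrank F (range Q) = t ∧ finrank F (range (1 - Q)) = d - t) ↔
      (IsIdempotentElem Q ∧ finrank F (range Q) = t) := by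
  constructor
  · rintro ⟨h1, h2⟩
    refine ⟨?_, h1⟩
    have htop : range Q ⊔ range (1 - Q) = ⊤ := by
      rw [eq_top_iff]
      intro x _
      have hx : x = Q x + (1 - Q) x := by simp [LinearMap.sub_apply]
      rw [hx]
      exact add_mem (mem_sup_left (mem_range_self Q x))
        (mem_sup_right (mem_range_self (1 - Q) x))
    have hsum := Submodule.finrank_sup_add_finrank_inf_eq (range Q) (range (1 - Q))
    rw [htop, finrank_top, hd, h1, h2] at hsum
    have hinf : finrank F ↥(range Q ⊓ range (1 - Q)) = 0 := by omega
    have hbot : range Q ⊓ range (1 - Q) = ⊥ := Submodule.finrank_eq_zero.mp hinf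
    refine LinearMap.ext fun x => ?_
    have hmem : Q x - Q (Q x) ∈ range Q ⊓ range (1 - Q) := by
      constructor
      · exact ⟨(1 - Q) x, by simp [LinearMap.sub_apply, map_sub]⟩
      · exact ⟨Q x, by simp [LinearMap.sub_apply]⟩
    rw [hbot, Submodule.mem_bot] at hmem
    rw [Module.End.mul_apply]
    exact (sub_eq_zero.mp hmem).symm
  · rintro ⟨hidem, h1⟩
    refine ⟨h1, ?_⟩
    have hker : range (1 - Q) = ker Q := by
      ext x
      constructor
      · rintro ⟨y, rfl⟩
        have hy : Q (Q y) = Q y := DFunLike.congr_fun hidem y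
        simp [mem_ker, LinearMap.sub_apply, map_sub, hy]
      · intro hx
        exact ⟨x, by simp [LinearMap.sub_apply, mem_ker.mp hx]⟩
    rw [hker]
    have hrn := Q.finrank_range_add_finrank_ker
    rw [hd, h1] at hrn
    omega


lemma card_P {d t : ℕ} (hd : finrank F V = d) (ht : t ≤ d) :
    Nat.card {P : V →ₗ[F] V // finrank F (range P) = t ∧ finrank F (range (1 + P)) = d - t}
      = q ^ (t * (d - t)) * gauss q d t := by
  have e1 : {P : V →ₗ[F] V // finrank F (range P) = t ∧ finrank F (range (1 + P)) = d - t} ≃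
      {Q : V →ₗ[F] V // finrank F (range Q) = t ∧ finrank F (range (1 - Q)) = d - t} := by
    refine ⟨fun P => ⟨-P.1, ?_, ?_⟩, fun Q => ⟨-Q.1, ?_, ?_⟩, ?_, ?_⟩
    · rw [range_neg]; exact P.2.1
    · rw [sub_neg_eq_add]; exact P.2.2
    · rw [range_neg]; exact Q.2.1
    · rw [← sub_eq_add_neg]; exact Q.2.2
    · intro P; exact Subtype.ext (neg_neg _)
    · intro Q; exact Subtype.ext (neg_neg _)
  rw [Nat.card_congr e1,
    Nat.card_congr (Equiv.subtypeEquivRight (fun Q => idem_iff_rank hd ht Q))]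
  have h := card_idem_rank (F := F) (V := V) (t := t) (by omega)
  rw [hd] at h
  rw [h, mul_comm, Nat.mul_comm (d - t) t]

end Main

section Bij

variable {F : Type*} [Field F] [Fintype F]

local notation "q" => Fintype.card F

variable {N M : Type*} [AddCommGroup N] [Module F N] [FiniteDimensional F N]
  [AddCommGroup M] [Module F M] [FiniteDimensional F M]

lemma equiv_main (φ : N →ₗ[F] M) {d t : ℕ} (hφ : finrank F (range φ) = d) (ht : t ≤ d) :
    Nat.card {f : N →ₗ[F] M //
        finrank F (range f) = t ∧ finrank F (range (f + φ)) = d - t} =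
      q ^ (t * (d - t)) * gauss q d t := by
  set W := range φ with hW
  let Ψ : (W →ₗ[F] W) → (N →ₗ[F] M) := fun P => W.subtype ∘ₗ (P ∘ₗ φ.rangeRestrict)
  have hrank : ∀ P : W →ₗ[F] W, finrank F (range (Ψ P)) = finrank F (range P) := by
    intro P
    show finrank F (range (W.subtype ∘ₗ (P ∘ₗ φ.rangeRestrict))) = _
    rw [range_comp, range_comp_of_range_eq_top P (range_rangeRestrict φ),
      Submodule.finrank_map_subtype_eq]
  have hone : Ψ 1 = φ := by
    refine LinearMap.ext fun x => ?_
    rfl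
  have hadd : ∀ P Q : W →ₗ[F] W, Ψ (P + Q) = Ψ P + Ψ Q := by
    intro P Q
    refine LinearMap.ext fun x => ?_
    simp [Ψ, comp_apply, LinearMap.add_apply]
  have hΨone : ∀ P : W →ₗ[F] W, Ψ P + φ = Ψ (1 + P) := by
    intro P
    rw [hadd, hone, add_comm]
  have hinj : Function.Injective Ψ := by
    intro P Q h
    refine LinearMap.ext fun y => ?_
    obtain ⟨x, rfl⟩ := range_eq_top.mp (range_rangeRestrict φ) y
    have := DFunLike.congr_fun h x
    exact Subtype.ext this
  have e : {P : W →ₗ[F] W // finrank F (range P) = t ∧ finrank F (range (1 + P)) = d - t} ≃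
      {f : N →ₗ[F] M // finrank F (range f) = t ∧ finrank F (range (f + φ)) = d - t} := by
    refine Equiv.ofBijective
      (fun P => ⟨Ψ P.1, by rw [hrank]; exact P.2.1, by rw [hΨone, hrank]; exact P.2.2⟩) ⟨?_, ?_⟩
    · intro P Q h
      exact Subtype.ext (hinj (congrArg Subtype.val h))
    · rintro ⟨f, h1, h2⟩
      -- range f ≤ range φ
      have hsup : range φ ≤ range f ⊔ range (f + φ) := by
        rintro y ⟨x, rfl⟩
        have hx : φ x = (f + φ) x - f x := by simp [LinearMap.add_apply]
        rw [hx]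
        exact sub_mem (Submodule.mem_sup_right (mem_range_self _ x))
          (Submodule.mem_sup_left (mem_range_self f x))
      have hsum := Submodule.finrank_sup_add_finrank_inf_eq (range f) (range (f + φ))
      have hle : finrank F ↥(range f ⊔ range (f + φ)) ≤ d := by
        rw [h1, h2] at hsum; omega
      have hsupeq : range φ = range f ⊔ range (f + φ) :=
        Submodule.eq_of_le_of_finrank_le hsup (by rw [hφ]; exact hle)
      have hr : range f ≤ W := by rw [hW, hsupeq]; exact le_sup_left
      -- ker φ ≤ ker f
      have hkinf : ker f ⊓ ker (f + φ) ≤ ker φ := by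
        rintro x ⟨hx1, hx2⟩
        have hx1' : f x = 0 := hx1
        have hx2' : f x + φ x = 0 := hx2
        show φ x = 0
        rw [hx1', zero_add] at hx2'
        exact hx2'
      have hrn1 := f.finrank_range_add_finrank_ker
      have hrn2 := (f + φ).finrank_range_add_finrank_ker
      have hrn3 := φ.finrank_range_add_finrank_ker
      have hksum := Submodule.finrank_sup_add_finrank_inf_eq (ker f) (ker (f + φ))
      have hkle : finrank F ↥(ker f ⊔ ker (f + φ)) ≤ finrank F N :=
        Submodule.finrank_le _
      have hkeq : ker f ⊓ ker (f + φ) = ker φ := by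
        refine Submodule.eq_of_le_of_finrank_le hkinf ?_
        rw [h1] at hrn1; rw [h2] at hrn2; rw [hφ] at hrn3
        omega
      have hk : ker φ ≤ ker f := by rw [← hkeq]; exact inf_le_left
      -- construct P
      have hmem : ∀ x, f x ∈ W := fun x => hr (mem_range_self f x)
      have hker' : ker φ ≤ ker (codRestrict W f hmem) := by
        intro x hx
        rw [mem_ker]
        exact Subtype.ext (hk hx)
      let P : W →ₗ[F] W :=
        ((ker φ).liftQ (codRestrict W f hmem) hker') ∘ₗ
          (φ.quotKerEquivRange.symm : W →ₗ[F] N ⧸ ker φ)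
      have hΨP : Ψ P = f := by
        refine LinearMap.ext fun x => ?_
        have h0 : φ.rangeRestrict x = φ.quotKerEquivRange (Submodule.Quotient.mk x) :=
          Subtype.ext (φ.quotKerEquivRange_apply_mk x).symm
        show (W.subtype) (P (φ.rangeRestrict x)) = f x
        rw [h0]
        show (W.subtype) (((ker φ).liftQ (codRestrict W f hmem) hker')
          (φ.quotKerEquivRange.symm (φ.quotKerEquivRange (Submodule.Quotient.mk x)))) = f x
        rw [LinearEquiv.symm_apply_apply, Submodule.liftQ_apply]
        rfl
      refine ⟨⟨P, ?_, ?_⟩, ?_⟩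
      · rw [← hrank, hΨP]; exact h1
      · rw [← hrank, ← hΨone, hΨP]; exact h2
      · exact Subtype.ext hΨP
  rw [← Nat.card_congr e]
  exact card_P hφ ht

end Bij

theorem stmt2 (F : Type) [Field F] [Fintype F] (m n t d : ℕ)
    (ht : t ≤ d) (hd : d ≤ min n m)
    (X Y : Matrix (Fin m) (Fin n) F) (hXY : (X - Y).rank = d) :
    Nat.card {Z : Matrix (Fin m) (Fin n) F // (Z - X).rank = t ∧ (Z - Y).rank = d - t} =
      (Fintype.card F) ^ (t * (d - t)) * gauss (Fintype.card F) d t := by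
  set φ : (Fin n → F) →ₗ[F] (Fin m → F) := (X - Y).mulVecLin with hφdef
  have hφ : finrank F (range φ) = d := hXY
  let E : Matrix (Fin m) (Fin n) F ≃ ((Fin n → F) →ₗ[F] (Fin m → F)) :=
    (Equiv.subRight X).trans Matrix.toLin'.toEquiv
  have e : {Z : Matrix (Fin m) (Fin n) F // (Z - X).rank = t ∧ (Z - Y).rank = d - t} ≃
      {f : (Fin n → F) →ₗ[F] (Fin m → F) //
        finrank F (range f) = t ∧ finrank F (range (f + φ)) = d - t} := by
    refine E.subtypeEquiv fun Z => ?_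
    have hEZ : E Z = (Z - X).mulVecLin := Matrix.toLin'_apply' (Z - X)
    constructor
    · rintro ⟨h1, h2⟩
      constructor
      · rw [hEZ]; exact h1
      · rw [hEZ, hφdef, ← Matrix.mulVecLin_add, sub_add_sub_cancel]; exact h2
    · rintro ⟨h1, h2⟩
      constructor
      · rw [hEZ] at h1; exact h1
      · rw [hEZ, hφdef, ← Matrix.mulVecLin_add, sub_add_sub_cancel] at h2; exact h2
  rw [Nat.card_congr e]
  exact equiv_main φ hφ ht
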